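/- For fixed n and m, identify a family (f₁,…,f_m) of vectors in ℂⁿ with a point of (ℂⁿ)^m. Then the set of m-tuples (f₁,…,f_m) ∈ (ℂⁿ)^m that are phase retrievable for ℂⁿ is an open subset of (ℂⁿ)^m (with its standard topology). In particular, the phase retrievability property is stable under sufficiently small perturbations of the frame vectors. -/

import Mathlib

open Finset

noncomputable def cip {n : ℕ} (x y : Fin n → ℂ) : ℂ := ∑ i, x i * starRingEnd ℂ (y i)

namespace PRaux
variable {n : ℕ}

lemma cip_conj (x y : Fin n → ℂ) : cip y x = starRingEnd ℂ (cip x y) := by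
  simp only [cip, map_sum, map_mul, Complex.conj_conj]
  exact Finset.sum_congr rfl fun i _ => by ring

lemma cip_self (x : Fin n → ℂ) :
    cip x x = ((∑ i, Complex.normSq (x i) : ℝ) : ℂ) := by
  simp only [cip, Complex.mul_conj]
  push_cast
  rfl

lemma cip_add_left (x y z : Fin n → ℂ) : cip (x + y) z = cip x z + cip y z := by
  simp [cip, add_mul, Finset.sum_add_distrib]

lemma cip_sub_left (x y z : Fin n → ℂ) : cip (x - y) z = cip x z - cip y z := by
  simp [cip, sub_mul, Finset.sum_sub_distrib]

lemma cip_smul_left (c : ℂ) (x z : Fin n → ℂ) : cip (c • x) z = c * cip x z := by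
  simp [cip, Finset.mul_sum, mul_assoc]

lemma cip_smul_right (c : ℂ) (x z : Fin n → ℂ) :
    cip x (c • z) = starRingEnd ℂ c * cip x z := by
  simp only [cip, Pi.smul_apply, smul_eq_mul, map_mul, Finset.mul_sum]
  exact Finset.sum_congr rfl fun i _ => by ring

lemma cip_add_right (x y z : Fin n → ℂ) : cip x (y + z) = cip x y + cip x z := by
  simp [cip, mul_add, Finset.sum_add_distrib]

lemma cip_sub_right (x y z : Fin n → ℂ) : cip x (y - z) = cip x y - cip x z := by
  simp [cip, mul_sub, Finset.sum_sub_distrib]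

lemma cont_cip : Continuous (fun p : (Fin n → ℂ) × (Fin n → ℂ) => cip p.1 p.2) := by
  unfold cip
  refine continuous_finset_sum _ fun i _ => ?_
  exact ((continuous_apply i).comp continuous_fst).mul
    (continuous_star.comp ((continuous_apply i).comp continuous_snd))

lemma eq_zero_of_sum_normSq {g : Fin n → ℂ}
    (h : ∑ i, Complex.normSq (g i) = 0) : g = 0 := by
  funext i
  have := (Finset.sum_eq_zero_iff_of_nonneg
    (fun i _ => Complex.normSq_nonneg (g i))).mp h i (Finset.mem_univ i)
  simpa [Complex.normSq_eq_zero] using this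

set_option maxHeartbeats 1000000 in
lemma exists_witness {m : ℕ} (f : Fin m → Fin n → ℂ) (x y : Fin n → ℂ)
    (hmeas : ∀ k, ‖cip x (f k)‖ = ‖cip y (f k)‖)
    (hne : ∀ c : ℂ, ‖c‖ = 1 → x ≠ c • y) :
    ∃ u v : Fin n → ℂ, cip u v = 0 ∧ cip u u + cip v v = 1 ∧
      ∀ k, ‖cip u (f k)‖ = ‖cip v (f k)‖ := by
  classical
  -- phase adjustment
  obtain ⟨c₀, hc₀def⟩ : ∃ c₀ : ℂ,
      c₀ = if cip x y = 0 then 1 else cip x y / ((‖cip x y‖ : ℝ) : ℂ) := ⟨_, rfl⟩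
  have hc₀ : ‖c₀‖ = 1 := by
    rw [hc₀def]
    split_ifs with h
    · simp
    · have habs : ‖cip x y‖ ≠ 0 := by simpa [norm_eq_zero] using h
      rw [norm_div, Complex.norm_of_nonneg (norm_nonneg _)]
      exact div_self habs
  obtain ⟨y₁, hy₁def⟩ : ∃ y₁ : Fin n → ℂ, y₁ = c₀ • y := ⟨_, rfl⟩
  obtain ⟨r, hrdef⟩ : ∃ r : ℝ, r = ‖cip x y‖ := ⟨_, rfl⟩
  have hr0 : 0 ≤ r := hrdef ▸ norm_nonneg _
  have hr : cip x y₁ = (r : ℝ) := by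
    rw [hy₁def, cip_smul_right, hc₀def, hrdef]
    split_ifs with h
    · simp [h]
    · have habs : ((‖cip x y‖ : ℝ) : ℂ) ≠ 0 := by
        simpa [Complex.ofReal_eq_zero, norm_eq_zero] using h
      rw [map_div₀, Complex.conj_ofReal]
      field_simp
      rw [mul_comm, Complex.mul_conj, Complex.normSq_eq_norm_sq]
      push_cast
      ring
  have hmeas1 : ∀ k, ‖cip x (f k)‖ = ‖cip y₁ (f k)‖ := by
    intro k
    rw [hy₁def, cip_smul_left, norm_mul, hc₀, one_mul]
    exact hmeas k
  have hne1 : ∀ c : ℂ, ‖c‖ = 1 → x ≠ c • y₁ := by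
    intro c hc hxc
    refine hne (c * c₀) (by rw [norm_mul, hc, hc₀, one_mul]) ?_
    rw [hxc, hy₁def, smul_smul]
  obtain ⟨a, hadef⟩ : ∃ a : ℝ, a = ∑ i, Complex.normSq (x i) := ⟨_, rfl⟩
  obtain ⟨b, hbdef⟩ : ∃ b : ℝ, b = ∑ i, Complex.normSq (y₁ i) := ⟨_, rfl⟩
  have ha0 : 0 ≤ a := hadef ▸ Finset.sum_nonneg fun i _ => Complex.normSq_nonneg _
  have hb0 : 0 ≤ b := hbdef ▸ Finset.sum_nonneg fun i _ => Complex.normSq_nonneg _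
  have hcipx : cip x x = (a : ℂ) := by rw [cip_self, hadef]
  have hcipy : cip y₁ y₁ = (b : ℂ) := by rw [cip_self, hbdef]
  have hcipyx : cip y₁ x = (r : ℂ) := by rw [cip_conj, hr, Complex.conj_ofReal]
  have hsub : ∑ i, Complex.normSq ((x - y₁) i) = a + b - 2*r := by
    have h1 : cip (x - y₁) (x - y₁) = ((a + b - 2*r : ℝ) : ℂ) := by
      rw [cip_sub_left, cip_sub_right, cip_sub_right, hcipx, hcipy, hr, hcipyx]
      push_cast
      ring
    rw [cip_self] at h1
    exact_mod_cast h1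
  have hsumnn : (0:ℝ) ≤ ∑ i, Complex.normSq ((x - y₁) i) :=
    Finset.sum_nonneg fun i _ => Complex.normSq_nonneg _
  have h2r : 2*r ≤ a + b := by linarith
  have hA : 0 < a + b := by
    rcases lt_or_eq_of_le (add_nonneg ha0 hb0) with h | h
    · exact h
    · exfalso
      have hx0 : x = 0 := eq_zero_of_sum_normSq (by rw [← hadef]; linarith)
      have hy10 : y₁ = 0 := eq_zero_of_sum_normSq (by rw [← hbdef]; linarith)
      have hy0 : y = 0 := by
        have hc₀ne : c₀ ≠ 0 := by
          intro h0; rw [h0] at hc₀; simp at hc₀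
        rcases smul_eq_zero.mp (hy₁def ▸ hy10) with h' | h'
        · exact absurd h' hc₀ne
        · exact h'
      exact hne 1 (by simp) (by rw [hx0, hy0]; simp)
  have hlt : 2*r < a + b := by
    rcases lt_or_eq_of_le h2r with h | h
    · exact h
    · exfalso
      have h0 : ∑ i, Complex.normSq ((x - y₁) i) = 0 := by linarith
      have hxy : x = y₁ := sub_eq_zero.mp (eq_zero_of_sum_normSq h0)
      exact hne c₀ hc₀ (by rw [hxy, hy₁def])
  -- choice of the mixing parameter q
  obtain ⟨q, hqdef⟩ : ∃ q : ℝ,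
      q = if r = 0 then 0 else (-(a+b) + Real.sqrt ((a+b)^2 - 4*r^2)) / (2*r) := ⟨_, rfl⟩
  have hroot : r*q^2 + (a+b)*q + r = 0 := by
    rw [hqdef]
    split_ifs with h
    · simp [h]
    · have hrpos : 0 < r := lt_of_le_of_ne hr0 (Ne.symm h)
      have hD : (0:ℝ) ≤ (a+b)^2 - 4*r^2 := by nlinarith
      have hs : Real.sqrt ((a+b)^2 - 4*r^2) ^ 2 = (a+b)^2 - 4*r^2 := Real.sq_sqrt hD
      field_simp
      rw [show (4:ℝ)*r^2 = r^2*4 by ring] at hs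
      nlinarith [hs]
  have hq2 : q^2 < 1 := by
    rw [hqdef]
    split_ifs with h
    · norm_num
    · have hrpos : 0 < r := lt_of_le_of_ne hr0 (Ne.symm h)
      have hD : (0:ℝ) ≤ (a+b)^2 - 4*r^2 := by nlinarith
      have hs : Real.sqrt ((a+b)^2 - 4*r^2) ^ 2 = (a+b)^2 - 4*r^2 := Real.sq_sqrt hD
      have hsnn : 0 ≤ Real.sqrt ((a+b)^2 - 4*r^2) := Real.sqrt_nonneg _
      have hsle : Real.sqrt ((a+b)^2 - 4*r^2) ≤ a + b := by
        have h' := Real.sqrt_le_sqrt (show (a+b)^2 - 4*r^2 ≤ (a+b)^2 by nlinarith)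
        rwa [Real.sqrt_sq hA.le] at h'
      have hgt : a + b - 2*r < Real.sqrt ((a+b)^2 - 4*r^2) :=
        (Real.lt_sqrt (by linarith)).mpr (by nlinarith)
      have hle0 : (-(a+b) + Real.sqrt ((a+b)^2 - 4*r^2)) / (2*r) ≤ 0 :=
        div_nonpos_of_nonpos_of_nonneg (by linarith) (by linarith)
      have hgt1 : -1 < (-(a+b) + Real.sqrt ((a+b)^2 - 4*r^2)) / (2*r) := by
        rw [lt_div_iff₀ (by linarith : (0:ℝ) < 2*r)]
        linarith
      nlinarith
  -- the mixed pair
  obtain ⟨u, hudef⟩ : ∃ u : Fin n → ℂ, u = x + (q:ℂ) • y₁ := ⟨_, rfl⟩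
  obtain ⟨v, hvdef⟩ : ∃ v : Fin n → ℂ, v = (q:ℂ) • x + y₁ := ⟨_, rfl⟩
  have hq2c : (1 : ℂ) - (q:ℂ)^2 ≠ 0 := by
    intro h0
    have : ((1 - q^2 : ℝ) : ℂ) = 0 := by push_cast; linear_combination h0
    have h1 : (1 - q^2 : ℝ) = 0 := by exact_mod_cast this
    linarith
  have horth : cip u v = 0 := by
    rw [hudef, hvdef]
    simp only [cip_add_left, cip_add_right, cip_smul_left, cip_smul_right,
      Complex.conj_ofReal, hcipx, hcipy, hr, hcipyx]
    have hc : ((r*q^2 + (a+b)*q + r : ℝ) : ℂ) = 0 := by rw [hroot]; norm_num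
    push_cast at hc
    linear_combination hc
  have hmeasuv : ∀ k, ‖cip u (f k)‖ = ‖cip v (f k)‖ := by
    intro k
    have hXY : cip x (f k) * starRingEnd ℂ (cip x (f k))
        = cip y₁ (f k) * starRingEnd ℂ (cip y₁ (f k)) := by
      rw [Complex.mul_conj, Complex.mul_conj]
      have : Complex.normSq (cip x (f k)) = Complex.normSq (cip y₁ (f k)) := by
        rw [Complex.normSq_eq_norm_sq, Complex.normSq_eq_norm_sq, hmeas1 k]
      exact_mod_cast this
    have hU : cip u (f k) = cip x (f k) + (q:ℂ) * cip y₁ (f k) := by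
      rw [hudef, cip_add_left, cip_smul_left]
    have hV : cip v (f k) = (q:ℂ) * cip x (f k) + cip y₁ (f k) := by
      rw [hvdef, cip_add_left, cip_smul_left]
    have hnsq : Complex.normSq (cip u (f k)) = Complex.normSq (cip v (f k)) := by
      have h2 : (Complex.normSq (cip u (f k)) : ℂ) = (Complex.normSq (cip v (f k)) : ℂ) := by
        rw [← Complex.mul_conj, ← Complex.mul_conj, hU, hV]
        simp only [map_add, map_mul, Complex.conj_ofReal]
        linear_combination (1 - (q:ℂ)^2) * hXY
      exact_mod_cast h2
    rw [Complex.norm_def, Complex.norm_def, hnsq]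
  -- the pair is nonzero
  obtain ⟨B, hBdef⟩ : ∃ B : ℝ,
      B = (∑ i, Complex.normSq (u i)) + ∑ i, Complex.normSq (v i) := ⟨_, rfl⟩
  have hs1nn : (0:ℝ) ≤ ∑ i, Complex.normSq (u i) :=
    Finset.sum_nonneg fun i _ => Complex.normSq_nonneg _
  have hs2nn : (0:ℝ) ≤ ∑ i, Complex.normSq (v i) :=
    Finset.sum_nonneg fun i _ => Complex.normSq_nonneg _
  have hBpos : 0 < B := by
    rcases lt_or_eq_of_le (hBdef ▸ add_nonneg hs1nn hs2nn) with h | h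
    · exact h
    · exfalso
      have hu0 : u = 0 := eq_zero_of_sum_normSq (by rw [hBdef] at h; linarith)
      have hv0 : v = 0 := eq_zero_of_sum_normSq (by rw [hBdef] at h; linarith)
      have hy₁x : y₁ = -((q:ℂ) • x) := by
        have : (q:ℂ) • x + y₁ = 0 := by rw [← hvdef, hv0]
        exact eq_neg_of_add_eq_zero_right this
      have hx0 : x = 0 := by
        have hz : ((1:ℂ) - (q:ℂ)^2) • x = 0 := by
          have h' : x + (q:ℂ) • y₁ = 0 := by rw [← hudef, hu0]
          rw [hy₁x, smul_neg, smul_smul] at h'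
          rw [sub_smul, one_smul, pow_two, sub_eq_add_neg]
          exact h'
        have := smul_eq_zero.mp hz
        rcases this with h' | h'
        · exact absurd h' hq2c
        · exact h'
      have hy10 : y₁ = 0 := by rw [hy₁x, hx0, smul_zero, neg_zero]
      have hy0 : y = 0 := by
        have hc₀ne : c₀ ≠ 0 := by
          intro h0; rw [h0] at hc₀; simp at hc₀
        rcases smul_eq_zero.mp (hy₁def ▸ hy10) with h' | h'
        · exact absurd h' hc₀ne
        · exact h'
      exact hne 1 (by simp) (by rw [hx0, hy0]; simp)
  -- normalization
  obtain ⟨t, htdef⟩ : ∃ t : ℝ, t = (Real.sqrt B)⁻¹ := ⟨_, rfl⟩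
  have ht2 : t^2 * B = 1 := by
    rw [htdef, ← Real.sqrt_inv, Real.sq_sqrt (by positivity)]
    exact inv_mul_cancel₀ hBpos.ne'
  refine ⟨(t:ℂ) • u, (t:ℂ) • v, ?_, ?_, ?_⟩
  · rw [cip_smul_left, cip_smul_right, horth, Complex.conj_ofReal]
    ring
  · rw [cip_smul_left, cip_smul_right, cip_smul_left, cip_smul_right,
      Complex.conj_ofReal, cip_self u, cip_self v]
    have hc := congrArg (Complex.ofReal) ht2
    rw [hBdef] at hc
    push_cast at hc ⊢
    linear_combination hc
  · intro k
    rw [cip_smul_left, cip_smul_left, norm_mul, norm_mul, hmeasuv k]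

lemma not_pr_of_witness {m : ℕ} (f : Fin m → Fin n → ℂ) (u v : Fin n → ℂ)
    (h1 : cip u v = 0) (h2 : cip u u + cip v v = 1)
    (hm : ∀ k, ‖cip u (f k)‖ = ‖cip v (f k)‖) :
    ¬ ∀ x y : Fin n → ℂ,
        (∀ k, ‖cip x (f k)‖ = ‖cip y (f k)‖) →
        ∃ c : ℂ, ‖c‖ = 1 ∧ x = c • y := by
  intro hpr
  obtain ⟨c, hc, huv⟩ := hpr u v hm
  have hcv : cip v v = 0 := by
    have : cip (c • v) v = 0 := by rw [← huv]; exact h1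
    rw [cip_smul_left] at this
    have hcne : c ≠ 0 := by intro h0; rw [h0] at hc; simp at hc
    exact (mul_eq_zero.mp this).resolve_left hcne
  have hv0 : v = 0 := by
    apply eq_zero_of_sum_normSq
    have := hcv
    rw [cip_self] at this
    exact_mod_cast this
  have hu0 : u = 0 := by rw [huv, hv0, smul_zero]
  rw [hu0, hv0] at h2
  simp [cip] at h2

end PRaux

open PRaux in
theorem isOpen_phase_retrievable (n m : ℕ) :
    IsOpen {f : Fin m → (Fin n → ℂ) |
      ∀ x y : Fin n → ℂ,
        (∀ k, ‖cip x (f k)‖ = ‖cip y (f k)‖) →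
        ∃ c : ℂ, ‖c‖ = 1 ∧ x = c • y} := by
  rw [← isClosed_compl_iff]
  set K : Set ((Fin n → ℂ) × (Fin n → ℂ)) :=
    {p | cip p.1 p.2 = 0 ∧ cip p.1 p.1 + cip p.2 p.2 = 1} with hK
  have hKclosed : IsClosed K := by
    apply IsClosed.inter
    · exact isClosed_eq cont_cip continuous_const
    · refine isClosed_eq (Continuous.add ?_ ?_) continuous_const
      · exact cont_cip.comp (continuous_fst.prodMk continuous_fst)
      · exact cont_cip.comp (continuous_snd.prodMk continuous_snd)
  have hKsub : K ⊆ Metric.closedBall 0 1 := by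
    rintro ⟨p1, p2⟩ ⟨-, h2⟩
    rw [cip_self, cip_self] at h2
    have hsum : (∑ i, Complex.normSq (p1 i)) + ∑ i, Complex.normSq (p2 i) = 1 := by
      exact_mod_cast h2
    have h1nn : (0:ℝ) ≤ ∑ i, Complex.normSq (p1 i) :=
      Finset.sum_nonneg fun i _ => Complex.normSq_nonneg _
    have h2nn : (0:ℝ) ≤ ∑ i, Complex.normSq (p2 i) :=
      Finset.sum_nonneg fun i _ => Complex.normSq_nonneg _
    have key : ∀ g : Fin n → ℂ, (∑ i, Complex.normSq (g i)) ≤ 1 → ‖g‖ ≤ 1 := by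
      intro g hg
      rw [pi_norm_le_iff_of_nonneg zero_le_one]
      intro i
      have hle : Complex.normSq (g i) ≤ 1 :=
        le_trans (Finset.single_le_sum (fun j (_ : j ∈ Finset.univ) =>
          Complex.normSq_nonneg (g j)) (Finset.mem_univ i)) hg
      have : ‖g i‖^2 ≤ 1 := by
        rw [Complex.sq_norm]
        exact hle
      nlinarith [norm_nonneg (g i)]
    rw [Metric.mem_closedBall, dist_zero_right, Prod.norm_def]
    exact max_le (key p1 (by linarith)) (key p2 (by linarith))
  have hKcompact : IsCompact K :=
    IsCompact.of_isClosed_subset (isCompact_closedBall 0 1) hKclosed hKsub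
  haveI : CompactSpace K := isCompact_iff_compactSpace.mp hKcompact
  set C : Set (K × (Fin m → Fin n → ℂ)) :=
    {q | ∀ k, ‖cip (q.1 : (Fin n → ℂ) × (Fin n → ℂ)).1 (q.2 k)‖
      = ‖cip (q.1 : (Fin n → ℂ) × (Fin n → ℂ)).2 (q.2 k)‖} with hC
  have hCclosed : IsClosed C := by
    have : C = ⋂ k, {q : K × (Fin m → Fin n → ℂ) |
        ‖cip (q.1 : (Fin n → ℂ) × (Fin n → ℂ)).1 (q.2 k)‖
        = ‖cip (q.1 : (Fin n → ℂ) × (Fin n → ℂ)).2 (q.2 k)‖} := by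
      ext q; simp [hC, Set.mem_iInter]
    rw [this]
    refine isClosed_iInter fun k => ?_
    have hcoe : Continuous fun q : K × (Fin m → Fin n → ℂ) =>
        ((q.1 : (Fin n → ℂ) × (Fin n → ℂ))) := continuous_subtype_val.comp continuous_fst
    have hfk : Continuous fun q : K × (Fin m → Fin n → ℂ) => q.2 k :=
      (continuous_apply k).comp continuous_snd
    exact isClosed_eq
      (continuous_norm.comp (cont_cip.comp ((hcoe.fst).prodMk hfk)))
      (continuous_norm.comp (cont_cip.comp ((hcoe.snd).prodMk hfk)))
  have himg : {f : Fin m → (Fin n → ℂ) |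
      ∀ x y : Fin n → ℂ,
        (∀ k, ‖cip x (f k)‖ = ‖cip y (f k)‖) →
        ∃ c : ℂ, ‖c‖ = 1 ∧ x = c • y}ᶜ = Prod.snd '' C := by
    ext f
    constructor
    · intro hf
      simp only [Set.mem_compl_iff, Set.mem_setOf_eq] at hf
      push_neg at hf
      obtain ⟨x, y, hmeas, hne⟩ := hf
      have hne' : ∀ c : ℂ, ‖c‖ = 1 → x ≠ c • y := by
        intro c hc hxy
        exact (hne c hc) hxy
      obtain ⟨u, v, h1, h2, h3⟩ := exists_witness f x y hmeas hne'
      exact ⟨(⟨(u, v), ⟨h1, h2⟩⟩, f), h3, rfl⟩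
    · rintro ⟨⟨⟨⟨u, v⟩, hm1, hm2⟩, g⟩, hmem, rfl⟩
      simp only [Set.mem_compl_iff, Set.mem_setOf_eq]
      exact not_pr_of_witness _ u v hm1 hm2 hmem
  rw [himg]
  exact isClosedMap_snd_of_compactSpace C hCclosed
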